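/- Fix α ∈ ℝ. There is a constant K = K(α) > 0 such that the following holds: for all R ≥ 1, all ε > 0, and all coprime integers p, q with q > 0 such that δ := α − p/q satisfies |δ| < ε/2, the quantity Δ⁺ := Σ_{0 < d ≤ (ε+δ)Rq/√(1+α²)} #{m ∈ ℤ : d/((ε+δ)q) < m ≤ R/√(1+α²), m ≡ −d·p̄ (mod q)}, where p̄ denotes a multiplicative inverse of p modulo q, satisfies |Δ⁺ − (1/2)·(ε+δ)·R²/(1+α²)| ≤ K·(R/q + 1/(εq²) + εqR). -/

import Mathlib

open Filter Real

lemma residue_set_eq (a b : ℝ) (r q : ℤ) (hq : 0 < q) :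
    {m : ℤ | a < (m:ℝ) ∧ (m:ℝ) ≤ b ∧ m ≡ r [ZMOD q]} =
      ↑((Finset.Ioc ⌊(a - r)/(q:ℝ)⌋ ⌊(b - r)/(q:ℝ)⌋).image (fun k => r + q * k)) := by
  have hq' : (0:ℝ) < q := by exact_mod_cast hq
  ext m
  simp only [Finset.coe_image, Set.mem_image, Finset.mem_coe, Finset.mem_Ioc, Set.mem_setOf_eq]
  constructor
  · rintro ⟨h1, h2, h3⟩
    obtain ⟨k, hk⟩ := (Int.ModEq.dvd h3)
    have hm : (m:ℝ) = r - q * k := by exact_mod_cast (by omega : m = r - q * k)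
    refine ⟨-k, ⟨?_, ?_⟩, by rw [mul_neg]; omega⟩
    · rw [Int.floor_lt, div_lt_iff₀ hq']; push_cast; nlinarith
    · rw [Int.le_floor, le_div_iff₀ hq']; push_cast; nlinarith
  · rintro ⟨k, ⟨hk1, hk2⟩, rfl⟩
    rw [Int.floor_lt, div_lt_iff₀ hq'] at hk1
    rw [Int.le_floor, le_div_iff₀ hq'] at hk2
    refine ⟨by push_cast; nlinarith, by push_cast; nlinarith, ?_⟩
    simpa using (Int.modEq_iff_dvd.mpr ⟨-k, by ring⟩)

lemma gauss_sum_Ioc (D : ℤ) (hD : 0 ≤ D) :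
    ∑ d ∈ Finset.Ioc (0:ℤ) D, (d:ℝ) = D * (D+1) / 2 := by
  refine Int.le_induction
    (motive := fun D _ => ∑ d ∈ Finset.Ioc (0:ℤ) D, (d:ℝ) = D * (D+1) / 2) ?_ ?_ D hD
  · simp
  · intro n hn ih
    have hins : Finset.Ioc (0:ℤ) (n+1) = insert (n+1) (Finset.Ioc 0 n) := by
      ext x; simp only [Finset.mem_Ioc, Finset.mem_insert]; omega
    rw [hins, Finset.sum_insert (by simp), ih]; push_cast; ring

/-- `DeltaPlus α ε R p q pbar` counts pairs `(d, m)` of integers with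
`0 < d ≤ (ε+δ)Rq/√(1+α²)`, `d/((ε+δ)q) < m ≤ R/√(1+α²)` and `m ≡ -d·p̄ (mod q)`,
where `δ = α - p/q` and `p̄ = pbar` is a multiplicative inverse of `p` modulo `q`. -/
noncomputable def DeltaPlus (α ε R : ℝ) (p q pbar : ℤ) : ℕ :=
  Set.ncard {x : ℤ × ℤ |
    0 < x.1 ∧ (x.1 : ℝ) ≤ (ε + (α - (p : ℝ) / q)) * R * q / Real.sqrt (1 + α ^ 2) ∧
    (x.1 : ℝ) / ((ε + (α - (p : ℝ) / q)) * q) < x.2 ∧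
    (x.2 : ℝ) ≤ R / Real.sqrt (1 + α ^ 2) ∧
    x.2 ≡ -(x.1 * pbar) [ZMOD q]}

set_option maxHeartbeats 1000000 in
/-- Fix `α ∈ ℝ`. There is `K = K(α) > 0` such that for all `R ≥ 1`, all `ε > 0`, and
all coprime integers `p, q` with `q > 0` such that `δ := α - p/q` satisfies `|δ| < ε/2`,
the quantity `Δ⁺` (counting pairs `(d, m)` with `0 < d ≤ (ε+δ)Rq/√(1+α²)`,
`d/((ε+δ)q) < m ≤ R/√(1+α²)`, `m ≡ -d·p̄ (mod q)`, `p̄` an inverse of `p` mod `q`)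
satisfies `|Δ⁺ - (1/2)(ε+δ)R²/(1+α²)| ≤ K·(R/q + 1/(εq²) + εqR)`. -/
theorem DeltaPlus_estimate (α : ℝ) :
    ∃ K > (0 : ℝ), ∀ R : ℝ, 1 ≤ R → ∀ ε : ℝ, 0 < ε →
      ∀ p q pbar : ℤ, 0 < q → Int.gcd p q = 1 → p * pbar ≡ 1 [ZMOD q] →
        |α - (p : ℝ) / q| < ε / 2 →
          |(DeltaPlus α ε R p q pbar : ℝ) -
              1 / 2 * (ε + (α - (p : ℝ) / q)) * R ^ 2 / (1 + α ^ 2)| ≤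
            K * (R / q + 1 / (ε * (q : ℝ) ^ 2) + ε * q * R) := by
  classical
  refine ⟨2, by norm_num, ?_⟩
  intro R hR ε hε p q pbar hq hcop hinv hδ
  set δ := α - (p : ℝ) / q with hδd
  set e := ε + δ with hed
  set s := Real.sqrt (1 + α ^ 2) with hsd
  set A := e * R * (q:ℝ) / s with hAd
  set B := R / s with hBd
  have hq' : (0:ℝ) < q := by exact_mod_cast hq
  have hs1 : 1 ≤ s := by
    nlinarith [Real.sq_sqrt (show (0:ℝ) ≤ 1 + α^2 by positivity),
      Real.sqrt_nonneg (1 + α^2), sq_nonneg α]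
  have hs0 : 0 < s := lt_of_lt_of_le one_pos hs1
  have hss : s ^ 2 = 1 + α ^ 2 := Real.sq_sqrt (by positivity)
  have habs := abs_lt.mp hδ
  have he0 : ε / 2 < e := by rw [hed]; linarith [habs.1]
  have he0' : (0:ℝ) < e := by linarith
  have he2 : e ≤ 3 * ε / 2 := by rw [hed]; linarith [habs.2]
  have hR0 : (0:ℝ) < R := lt_of_lt_of_le one_pos hR
  have hB0 : (0:ℝ) < B := by rw [hBd]; positivity
  have hBR : B ≤ R := by rw [hBd, div_le_iff₀ hs0]; nlinarith
  have hA0 : (0:ℝ) < A := by rw [hAd]; positivity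
  have hAB : A = e * q * B := by rw [hAd, hBd]; ring
  set D := ⌊A⌋ with hDd
  have hD0 : (0:ℤ) ≤ D := Int.le_floor.mpr (by simpa using hA0.le)
  have hD0' : (0:ℝ) ≤ (D:ℝ) := by exact_mod_cast hD0
  have hDA : (D:ℝ) ≤ A := Int.floor_le A
  have hAD : A < D + 1 := Int.lt_floor_add_one A
  have hDle : ∀ z : ℤ, z ≤ D ↔ (z:ℝ) ≤ A := fun z => Int.le_floor
  clear_value δ e s A B D
  set r : ℤ → ℤ := fun d => -(d * pbar) with hrd
  set G : ℤ → Finset ℤ := fun d =>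
    (Finset.Ioc ⌊((d:ℝ)/(e*q) - r d)/(q:ℝ)⌋ ⌊(B - r d)/(q:ℝ)⌋).image (fun k => r d + q * k)
    with hGd
  have hG : ∀ d (m:ℤ), m ∈ G d ↔
      ((d:ℝ)/(e*q) < m ∧ (m:ℝ) ≤ B ∧ m ≡ r d [ZMOD q]) := by
    intro d m
    rw [← Finset.mem_coe, hGd]
    rw [← residue_set_eq ((d:ℝ)/(e*q)) B (r d) q hq]
    exact Iff.rfl
  set F : Finset (ℤ × ℤ) :=
    (Finset.Ioc 0 D).biUnion (fun d => (G d).image (fun m => (d, m))) with hFd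
  clear_value r G F
  -- DeltaPlus equals F.card
  have hS : {x : ℤ × ℤ |
      0 < x.1 ∧ (x.1 : ℝ) ≤ A ∧ (x.1 : ℝ) / (e * q) < x.2 ∧ (x.2 : ℝ) ≤ B ∧
      x.2 ≡ -(x.1 * pbar) [ZMOD q]} = ↑F := by
    ext ⟨d, m⟩
    simp only [Set.mem_setOf_eq, Finset.mem_coe, hFd, Finset.mem_biUnion, Finset.mem_image,
      Finset.mem_Ioc, Prod.mk.injEq]
    constructor
    · rintro ⟨h1, h2, h3, h4, h5⟩
      exact ⟨d, ⟨h1, (hDle d).mpr h2⟩, m, (hG d m).mpr ⟨h3, h4, by simp only [hrd]; exact h5⟩, rfl, rfl⟩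
    · rintro ⟨d', ⟨hd1, hd2⟩, m', hm', rfl, rfl⟩
      obtain ⟨h3, h4, h5⟩ := (hG d' m').mp hm'
      exact ⟨hd1, (hDle d').mp hd2, h3, h4, by simpa only [hrd] using h5⟩
  have key : (DeltaPlus α ε R p q pbar : ℝ) = (F.card : ℝ) := by
    unfold DeltaPlus
    rw [← hδd, ← hed, ← hsd, ← hAd, ← hBd, hS, Set.ncard_coe_finset]
  -- card of F as a sum
  have hinj : ∀ d : ℤ, Function.Injective (fun m : ℤ => (d, m)) := by
    intro d a b h; simpa using h
  have hFcard : (F.card : ℝ) = ∑ d ∈ Finset.Ioc (0:ℤ) D, ((G d).card : ℝ) := by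
    rw [hFd, Finset.card_biUnion]
    · push_cast
      refine Finset.sum_congr rfl fun d _ => ?_
      rw [Finset.card_image_of_injective _ (hinj d)]
    · intro x _ y _ hxy
      refine Finset.disjoint_left.mpr ?_
      rintro ⟨a, b⟩ hx hy
      simp only [Finset.mem_image, Prod.mk.injEq] at hx hy
      obtain ⟨_, _, h1, _⟩ := hx
      obtain ⟨_, _, h2, _⟩ := hy
      exact hxy (h1.trans h2.symm)
  -- per-d estimate
  have heq0 : (0:ℝ) < e * q := by positivity
  have perd : ∀ d ∈ Finset.Ioc (0:ℤ) D,
      |((G d).card : ℝ) - (B - (d:ℝ)/(e*q))/(q:ℝ)| ≤ 1 := by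
    intro d hd
    rw [Finset.mem_Ioc] at hd
    have hdA : (d:ℝ) ≤ A := (hDle d).mp hd.2
    have hdB : (d:ℝ)/(e*q) ≤ B := by
      rw [div_le_iff₀ heq0]; rw [hAB] at hdA; nlinarith
    have hxy : ((d:ℝ)/(e*q) - r d)/(q:ℝ) ≤ (B - r d)/(q:ℝ) := by gcongr
    have hfl : ⌊((d:ℝ)/(e*q) - r d)/(q:ℝ)⌋ ≤ ⌊(B - r d)/(q:ℝ)⌋ := Int.floor_le_floor hxy
    have hcard : ((G d).card : ℝ) =
        ((⌊(B - r d)/(q:ℝ)⌋ : ℝ) - (⌊((d:ℝ)/(e*q) - r d)/(q:ℝ)⌋ : ℝ)) := by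
      simp only [hGd]
      rw [Finset.card_image_of_injective _
        (fun x y h => mul_left_cancel₀ hq.ne' (by omega : q * x = q * y)), Int.card_Ioc]
      have h0 : (0:ℤ) ≤ ⌊(B - r d)/(q:ℝ)⌋ - ⌊((d:ℝ)/(e*q) - r d)/(q:ℝ)⌋ := by omega
      exact_mod_cast congrArg (fun z : ℤ => (z:ℝ)) (Int.toNat_of_nonneg h0)
    rw [hcard]
    have h1 := Int.floor_le ((B - r d)/(q:ℝ))
    have h2 := Int.lt_floor_add_one ((B - r d)/(q:ℝ))
    have h3 := Int.floor_le (((d:ℝ)/(e*q) - r d)/(q:ℝ))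
    have h4 := Int.lt_floor_add_one (((d:ℝ)/(e*q) - r d)/(q:ℝ))
    have hdiff : (B - r d)/(q:ℝ) - ((d:ℝ)/(e*q) - r d)/(q:ℝ) = (B - (d:ℝ)/(e*q))/(q:ℝ) := by
      ring
    rw [abs_le]
    constructor <;> linarith
  have hDcard : ((Finset.Ioc (0:ℤ) D).card : ℝ) = (D:ℝ) := by
    rw [Int.card_Ioc, Int.sub_zero]
    exact_mod_cast congrArg (fun z : ℤ => (z:ℝ)) (Int.toNat_of_nonneg hD0)
  have sumbound : |(F.card : ℝ) - ∑ d ∈ Finset.Ioc (0:ℤ) D, (B - (d:ℝ)/(e*q))/(q:ℝ)| ≤ (D:ℝ) := by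
    rw [hFcard, ← Finset.sum_sub_distrib]
    calc |∑ d ∈ Finset.Ioc (0:ℤ) D, (((G d).card : ℝ) - (B - (d:ℝ)/(e*q))/(q:ℝ))|
        ≤ ∑ d ∈ Finset.Ioc (0:ℤ) D, |((G d).card : ℝ) - (B - (d:ℝ)/(e*q))/(q:ℝ)| :=
          Finset.abs_sum_le_sum_abs _ _
      _ ≤ ∑ d ∈ Finset.Ioc (0:ℤ) D, 1 := Finset.sum_le_sum perd
      _ = (D:ℝ) := by rw [Finset.sum_const, nsmul_eq_mul, mul_one, hDcard]
  -- evaluate the main sum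
  have hmain : ∑ d ∈ Finset.Ioc (0:ℤ) D, (B - (d:ℝ)/(e*q))/(q:ℝ)
      = (D:ℝ) * B / q - (D:ℝ) * ((D:ℝ)+1) / (2 * e * (q:ℝ)^2) := by
    have h1 : ∀ d : ℤ, (B - (d:ℝ)/(e*q))/(q:ℝ) = B/q - (d:ℝ) * (1/(e*(q:ℝ)^2)) := by
      intro d; field_simp
    rw [Finset.sum_congr rfl (fun d _ => h1 d), Finset.sum_sub_distrib, Finset.sum_const,
      ← Finset.sum_mul, gauss_sum_Ioc D hD0, nsmul_eq_mul, hDcard]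
    field_simp
  -- main-term comparison
  have hT : 1/2 * e * R^2/(1+α^2) = e * B^2 / 2 := by
    rw [← hss, hBd]; field_simp
  have hMT : |((D:ℝ) * B / q - (D:ℝ)*((D:ℝ)+1)/(2*e*(q:ℝ)^2)) - 1/2 * e * R^2/(1+α^2)|
      ≤ B/q + (A+1)/(2*e*(q:ℝ)^2) := by
    rw [hT]
    have h1 : e * B^2/2 = A*B/q - A^2/(2*e*(q:ℝ)^2) := by
      rw [hAB]; field_simp; ring
    rw [h1]
    have hd1 : |(D:ℝ) - A| ≤ 1 := abs_le.mpr ⟨by linarith, by linarith⟩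
    have hd2 : |(D:ℝ)*((D:ℝ)+1) - A^2| ≤ A + 1 := by
      rw [abs_le]
      constructor <;>
        nlinarith [mul_le_mul_of_nonneg_left hAD.le hA0.le,
          mul_le_mul_of_nonneg_right hAD.le hD0',
          mul_le_mul_of_nonneg_left hDA hA0.le,
          mul_nonneg hD0' (sub_nonneg.mpr hDA)]
    have expand : (D:ℝ)*B/q - (D:ℝ)*((D:ℝ)+1)/(2*e*(q:ℝ)^2) - (A*B/q - A^2/(2*e*(q:ℝ)^2))
        = ((D:ℝ) - A)*(B/q) - ((D:ℝ)*((D:ℝ)+1) - A^2)/(2*e*(q:ℝ)^2) := by ring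
    rw [expand]
    have tri : ∀ x y : ℝ, |x - y| ≤ |x| + |y| := fun x y => by
      rw [sub_eq_add_neg]
      exact (abs_add_le _ _).trans (by rw [abs_neg])
    refine (tri _ _).trans (add_le_add ?_ ?_)
    · rw [abs_mul, abs_of_nonneg (by positivity : (0:ℝ) ≤ B/q)]
      nlinarith [abs_nonneg ((D:ℝ) - A), div_nonneg hB0.le hq'.le]
    · rw [abs_div, abs_of_nonneg (by positivity : (0:ℝ) ≤ 2*e*(q:ℝ)^2)]
      gcongr
  -- final numeric bounds
  have hb1 : (D:ℝ) ≤ 3/2 * (ε * q * R) := by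
    have h : e * (q * B) ≤ (3*ε/2) * (q*R) :=
      mul_le_mul he2 (mul_le_mul_of_nonneg_left hBR hq'.le) (by positivity) (by positivity)
    have h2 : A = e * (q * B) := by rw [hAB]; ring
    nlinarith
  have hb2 : B/(q:ℝ) ≤ R/q := by gcongr
  have hb3 : (A+1)/(2*e*(q:ℝ)^2) ≤ R/(2*q) + 1/(ε*(q:ℝ)^2) := by
    have hsplit : (A+1)/(2*e*(q:ℝ)^2) = A/(2*e*(q:ℝ)^2) + 1/(2*e*(q:ℝ)^2) := by ring
    have hA2 : A/(2*e*(q:ℝ)^2) = B/(2*q) := by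
      rw [hAB]; field_simp
    have h12 : 1/(2*e*(q:ℝ)^2) ≤ 1/(ε*(q:ℝ)^2) := by
      apply one_div_le_one_div_of_le (by positivity)
      nlinarith [sq_nonneg (q:ℝ)]
    have hB2 : B/(2*q) ≤ R/(2*q) := by gcongr
    rw [hsplit, hA2]
    linarith
  -- assemble
  calc |(DeltaPlus α ε R p q pbar : ℝ) - 1 / 2 * e * R ^ 2 / (1 + α ^ 2)|
      ≤ |(F.card : ℝ) - ((D:ℝ) * B / q - (D:ℝ)*((D:ℝ)+1)/(2*e*(q:ℝ)^2))|
        + |((D:ℝ) * B / q - (D:ℝ)*((D:ℝ)+1)/(2*e*(q:ℝ)^2)) - 1/2 * e * R^2/(1+α^2)| := by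
        rw [key]; exact abs_sub_le _ _ _
    _ ≤ (D:ℝ) + (B/q + (A+1)/(2*e*(q:ℝ)^2)) := by
        refine add_le_add ?_ hMT
        rw [← hmain]; exact sumbound
    _ ≤ 2 * (R / q + 1 / (ε * (q:ℝ) ^ 2) + ε * q * R) := by
        have hnn1 : (0:ℝ) ≤ R/q := by positivity
        have hnn2 : (0:ℝ) ≤ 1/(ε*(q:ℝ)^2) := by positivity
        have hnn3 : (0:ℝ) ≤ ε*q*R := by positivity
        have h4 : R/(2*(q:ℝ)) = R/q/2 := by rw [div_div, mul_comm]
        linarith
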